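/- Let V : ℝ → ℝ be defined piecewise by V(x) = k(x − θ) + V₀ for x < θ and V(x) = A·exp(γ₋x) + 1/r − exp(νx)/β for x ≥ θ, where V₀ = A·exp(γ₋θ) + 1/r − exp(νθ)/β. If A·γ₋·exp(γ₋θ) − (ν/β)exp(νθ) = k and A·γ₋²·exp(γ₋θ) − (ν²/β)exp(νθ) = 0, then V is twice continuously differentiable on ℝ. -/

import Mathlib

open Real

lemma glue_hasDerivAt (θ : ℝ) (f g df dg : ℝ → ℝ)
    (hf : ∀ x, HasDerivAt f (df x) x) (hg : ∀ x, HasDerivAt g (dg x) x)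
    (hval : f θ = g θ) (hder : df θ = dg θ) (x : ℝ) :
    HasDerivAt (fun y => if y < θ then f y else g y)
      (if x < θ then df x else dg x) x := by
  rcases lt_trichotomy x θ with h | h | h
  · rw [if_pos h]
    apply (hf x).congr_of_eventuallyEq
    filter_upwards [Iio_mem_nhds h] with y hy
    rw [if_pos (Set.mem_Iio.mp hy)]
  · subst h
    rw [if_neg (lt_irrefl x)]
    have h1 : HasDerivWithinAt (fun y => if y < x then f y else g y) (dg x) (Set.Iic x) x := by
      refine ((hder ▸ (hf x)).hasDerivWithinAt).congr ?_ ?_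
      · intro y hy
        rcases lt_or_eq_of_le (Set.mem_Iic.mp hy) with h' | h'
        · rw [if_pos h']
        · subst h'; rw [if_neg (lt_irrefl y), hval]
      · rw [if_neg (lt_irrefl x), hval]
    have h2 : HasDerivWithinAt (fun y => if y < x then f y else g y) (dg x) (Set.Ici x) x := by
      refine ((hg x).hasDerivWithinAt).congr ?_ ?_
      · intro y hy
        rw [if_neg (not_lt.mpr (Set.mem_Ici.mp hy))]
      · rw [if_neg (lt_irrefl x)]
    have := h1.union h2
    rwa [Set.Iic_union_Ici, hasDerivWithinAt_univ] at this
  · rw [if_neg (not_lt.mpr h.le)]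
    apply (hg x).congr_of_eventuallyEq
    filter_upwards [Ioi_mem_nhds h] with y hy
    rw [if_neg (not_lt.mpr (le_of_lt (Set.mem_Ioi.mp hy)))]

theorem value_function_C2
    (r β ν γm k θ A : ℝ)
    (hr : 0 < r) (hβ : 0 < β) (hν : ν < 0) (hγm : γm < 0) (hk : 0 < k)
    (V₀ : ℝ) (hV₀ : V₀ = A * Real.exp (γm * θ) + 1 / r - Real.exp (ν * θ) / β)
    (V : ℝ → ℝ)
    (hV : V = fun x => if x < θ then k * (x - θ) + V₀
      else A * Real.exp (γm * x) + 1 / r - Real.exp (ν * x) / β)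
    (hfit1 : A * γm * Real.exp (γm * θ) - (ν / β) * Real.exp (ν * θ) = k)
    (hfit2 : A * γm ^ 2 * Real.exp (γm * θ) - (ν ^ 2 / β) * Real.exp (ν * θ) = 0) :
    ContDiff ℝ 2 V := by
  have hexp : ∀ c x : ℝ, HasDerivAt (fun x => Real.exp (c * x)) (c * Real.exp (c * x)) x := by
    intro c x
    simpa [mul_comm, Function.comp_def] using (Real.hasDerivAt_exp (c * x)).comp x ((hasDerivAt_id x).const_mul c)
  set g : ℝ → ℝ := fun x => A * Real.exp (γm * x) + 1 / r - Real.exp (ν * x) / β with hg_def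
  set g1 : ℝ → ℝ := fun x => A * γm * Real.exp (γm * x) - (ν / β) * Real.exp (ν * x) with hg1_def
  set g2 : ℝ → ℝ := fun x => A * γm ^ 2 * Real.exp (γm * x) - (ν ^ 2 / β) * Real.exp (ν * x)
    with hg2_def
  have hg : ∀ x, HasDerivAt g (g1 x) x := by
    intro x
    have := (((hexp γm x).const_mul A).add_const (1 / r)).sub ((hexp ν x).div_const β)
    refine this.congr_deriv ?_
    simp [hg1_def]; ring
  have hg1 : ∀ x, HasDerivAt g1 (g2 x) x := by
    intro x
    have := ((hexp γm x).const_mul (A * γm)).sub ((hexp ν x).const_mul (ν / β))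
    refine this.congr_deriv ?_
    simp [hg2_def]; ring
  have hlin : ∀ x : ℝ, HasDerivAt (fun y : ℝ => k * (y - θ) + V₀) k x := by
    intro x
    simpa using (((hasDerivAt_id x).sub_const θ).const_mul k).add_const V₀
  set Vd : ℝ → ℝ := fun x => if x < θ then k else g1 x with hVd_def
  set Vdd : ℝ → ℝ := fun x => if x < θ then 0 else g2 x with hVdd_def
  have hV1 : ∀ x, HasDerivAt V (Vd x) x := by
    intro x
    rw [hV, hVd_def]
    exact glue_hasDerivAt θ _ g (fun _ => k) g1 hlin hg
      (by simp [hg_def, hV₀]) (by simp [hg1_def, hfit1]) x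
  have hV2 : ∀ x, HasDerivAt Vd (Vdd x) x := by
    intro x
    rw [hVd_def, hVdd_def]
    exact glue_hasDerivAt θ (fun _ => k) g1 (fun _ => 0) g2
      (fun y => hasDerivAt_const y k) hg1
      (by simp [hg1_def, hfit1]) (by simp [hg2_def, hfit2]) x
  have hcont : Continuous Vdd := by
    have heq : Vdd = fun x => if θ ≤ x then g2 x else 0 := by
      funext x
      by_cases h : x < θ
      · rw [hVdd_def]; simp [h, not_le.mpr h]
      · rw [hVdd_def]; simp [h, not_lt.mp h]
    rw [heq]
    refine Continuous.if_le ?_ continuous_const continuous_const continuous_id ?_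
    · rw [hg2_def]; fun_prop
    · intro x hx
      rw [hg2_def]
      simp only at hx ⊢
      rw [← hx]
      exact hfit2
  have hdV : deriv V = Vd := funext fun x => (hV1 x).deriv
  have hdVd : deriv Vd = Vdd := funext fun x => (hV2 x).deriv
  have h1 : ContDiff ℝ 1 Vd := by
    rw [contDiff_one_iff_deriv, hdVd]
    exact ⟨fun x => (hV2 x).differentiableAt, hcont⟩
  have h2 : ContDiff ℝ (1 + 1 : WithTop ℕ∞) V := by
    rw [contDiff_succ_iff_deriv, hdV]
    refine ⟨fun x => (hV1 x).differentiableAt, ?_, h1⟩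
    intro hω
    exact absurd hω (by decide)
  have h21 : (2 : WithTop ℕ∞) = 1 + 1 := by norm_num
  rwa [h21]
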